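/- In the counterexample construction: define I(R_k) = { t'_{k,j} : θ_{k,j}(t_k) holds, 1 ≤ j ≤ n_k } and I(R_i) = {t_i} for i ≠ k, and I'(R_k) = I(R_k) ∪ {t_k}, I'(R_i) = I(R_i) for i ≠ k, where each t'_{k,j} satisfies θ_{k,j}(t'_{k,j}) and t'_{k,j}[U_{k,j}] = t_k[U_{k,j}]. Then for every view V_{k,j} = π_{U_{k,j}} σ_{θ_{k,j}} R_k, we have V_{k,j}(I) = V_{k,j}(I'). -/
import Mathlib


open scoped Classical

noncomputable def restrict {A B : Type*} (U : Set A) (t : A → B) : A → Option B :=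
  fun a => if a ∈ U then some (t a) else none

noncomputable def psView {A B : Type*} (U : Set A) (θ : (A → B) → Prop)
    (S : Set (A → B)) : Set (A → Option B) :=
  {r | ∃ t ∈ S, θ t ∧ r = restrict U t}

theorem counterexample_views_agree {A B : Type*} (n : ℕ)
    (Uv : Fin n → Set A) (θv : Fin n → (A → B) → Prop)
    (tk : A → B) (t' : Fin n → A → B)
    (hwit : ∀ j : Fin n, θv j tk →
      θv j (t' j) ∧ restrict (Uv j) (t' j) = restrict (Uv j) tk) :
    ∀ j : Fin n,
      psView (Uv j) (θv j) {s | ∃ j' : Fin n, θv j' tk ∧ s = t' j'} =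
      psView (Uv j) (θv j) ({s | ∃ j' : Fin n, θv j' tk ∧ s = t' j'} ∪ {tk}) := by
  intro j
  ext r
  constructor
  · rintro ⟨t, ht, hθ, rfl⟩
    exact ⟨t, Or.inl ht, hθ, rfl⟩
  · rintro ⟨t, ht, hθ, rfl⟩
    rcases ht with ht | ht
    · exact ⟨t, ht, hθ, rfl⟩
    · have htk : t = tk := ht
      subst htk
      obtain ⟨h1, h2⟩ := hwit j hθ
      exact ⟨t' j, ⟨j, hθ, rfl⟩, h1, h2.symm⟩
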